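/- Let G be a connected graph with n vertices and edge set E. Then the sum of effective resistances over all edges equals n − 1: Σ_{uv ∈ E} r_uv(G) = n − 1. -/

import Mathlib

open Matrix

/-- Effective resistance defined from a (pseudo)inverse matrix. -/
def effRes {V : Type*} (M : Matrix V V ℝ) (u v : V) : ℝ :=
  M u u + M v v - 2 * M u v

open Finset in
/-- A Moore–Penrose pseudoinverse of a symmetric matrix is symmetric. -/
lemma pinv_isSymm {m : Type*} [Fintype m] [DecidableEq m]
    (L Lp : Matrix m m ℝ) (hL : Lᵀ = L)
    (hp1 : L * Lp * L = L) (hp2 : Lp * L * Lp = Lp)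
    (hp3 : (L * Lp)ᵀ = L * Lp) (hp4 : (Lp * L)ᵀ = Lp * L) :
    Lpᵀ = Lp := by
  have hCA : Lpᵀ * L = L * Lp := by
    have h : (L * Lp)ᵀ = Lpᵀ * Lᵀ := transpose_mul _ _
    rw [hL] at h
    rw [← h, hp3]
  have hAC : L * Lpᵀ = Lp * L := by
    have h : (Lp * L)ᵀ = Lᵀ * Lpᵀ := transpose_mul _ _
    rw [hL] at h
    rw [← hp4, h]
  have hACA : L * Lpᵀ * L = L := by
    have h : (L * Lpᵀ * L)ᵀ = L * Lp * L := by
      simp [Matrix.transpose_mul, hL, Matrix.mul_assoc]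
    calc L * Lpᵀ * L = (L * Lpᵀ * L)ᵀᵀ := (transpose_transpose _).symm
      _ = (L * Lp * L)ᵀ := by rw [h]
      _ = L := by rw [hp1, hL]
  have htC : Lpᵀ * L * Lpᵀ = Lpᵀ := by
    have h := congrArg Matrix.transpose hp2
    simpa [Matrix.transpose_mul, hL, Matrix.mul_assoc] using h
  have hPR : L * Lp = Lp * L := by
    have h1 : L * Lp = (Lp * L) * (L * Lp) := by
      conv_lhs => rw [← hACA]
      rw [← hAC]
      simp [Matrix.mul_assoc]
    have h2 : Lp * L = (Lp * L) * (L * Lp) := by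
      conv_lhs => rw [← hACA, Matrix.mul_assoc L, hCA]
      simp [Matrix.mul_assoc]
    rw [h1, ← h2]
  calc Lpᵀ = Lpᵀ * L * Lpᵀ := htC.symm
    _ = (L * Lp) * Lpᵀ := by rw [hCA]
    _ = (Lp * L) * Lpᵀ := by rw [hPR]
    _ = Lp * (L * Lpᵀ) := by rw [Matrix.mul_assoc]
    _ = Lp * (Lp * L) := by rw [hAC]
    _ = Lp * (L * Lp) := by rw [hPR]
    _ = Lp := by rw [← Matrix.mul_assoc, hp2]

open Finset in
/-- The trace of `L⁺L` is `n - 1` for a connected graph on `n` vertices. -/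
lemma trace_lap_pinv {n : ℕ} (G : SimpleGraph (Fin n))
    [DecidableRel G.Adj] (hG : G.Connected)
    (Lp : Matrix (Fin n) (Fin n) ℝ)
    (hp1 : G.lapMatrix ℝ * Lp * G.lapMatrix ℝ = G.lapMatrix ℝ)
    (hp3 : (G.lapMatrix ℝ * Lp)ᵀ = G.lapMatrix ℝ * Lp) :
    ∑ u : Fin n, (G.lapMatrix ℝ * Lp) u u = (n : ℝ) - 1 := by
  set L := G.lapMatrix ℝ with hLdef
  have hn : 0 < n := by obtain ⟨v⟩ := hG.nonempty; exact v.pos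
  set Q : Matrix (Fin n) (Fin n) ℝ := 1 - L * Lp with hQdef
  have hQsymm : Qᵀ = Q := by
    rw [hQdef, Matrix.transpose_sub, Matrix.transpose_one, hp3]
  have hQL : Q * L = 0 := by
    rw [hQdef, Matrix.sub_mul, Matrix.one_mul, Matrix.mul_assoc, ← Matrix.mul_assoc, hp1, sub_self]
  have hLQ : L * Q = 0 := by
    have hL : Lᵀ = L := G.isSymm_lapMatrix ℝ
    calc L * Q = Lᵀ * Qᵀ := by rw [hL, hQsymm]
      _ = (Q * L)ᵀ := (transpose_mul _ _).symm
      _ = 0 := by rw [hQL, Matrix.transpose_zero]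
  have hcol : ∀ j i i' : Fin n, Q i j = Q i' j := by
    intro j i i'
    have hx : Matrix.toLin' L (fun i => Q i j) = 0 := by
      rw [Matrix.toLin'_apply]
      funext k
      have h := congrFun (congrFun hLQ k) j
      simpa [Matrix.mulVec, Matrix.mul_apply, dotProduct] using h
    rw [Matrix.toLin'_apply] at hx
    exact G.lapMatrix_mulVec_eq_zero_iff_forall_reachable.mp hx i i'
      (hG.preconnected i i')
  set i0 : Fin n := ⟨0, hn⟩
  set c : ℝ := Q i0 i0 with hcdef
  have hQc : ∀ i j, Q i j = c := by
    intro i j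
    have h1 : Q i j = Q i0 j := hcol j i i0
    have h2 : Q i0 j = Q j i0 := by
      conv_lhs => rw [← hQsymm]
      rfl
    have h3 : Q j i0 = Q i0 i0 := hcol i0 j i0
    rw [h1, h2, h3]
  have hQQ : Q * Q = Q := by
    have hPP : (L * Lp) * (L * Lp) = L * Lp := by
      rw [← Matrix.mul_assoc, hp1]
    rw [hQdef, Matrix.sub_mul, Matrix.mul_sub, Matrix.mul_sub, Matrix.one_mul, Matrix.mul_one,
      Matrix.one_mul, hPP]
    abel
  have hc : (n : ℝ) * (c * c) = c := by
    have h := congrFun (congrFun hQQ i0) i0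
    rw [Matrix.mul_apply] at h
    simp only [hQc] at h
    rw [Finset.sum_const, Finset.card_univ, Fintype.card_fin, nsmul_eq_mul] at h
    exact h
  have hcne : c ≠ 0 := by
    intro hc0
    have hQ0 : Q = 0 := by
      ext i j; rw [hQc i j, hc0]; rfl
    have hP1 : L * Lp = 1 := by
      have := hQdef ▸ hQ0
      rwa [sub_eq_zero, eq_comm] at this
    have hCA : Lpᵀ * L = 1 := by
      have hL : Lᵀ = L := G.isSymm_lapMatrix ℝ
      have h : (L * Lp)ᵀ = Lpᵀ * Lᵀ := transpose_mul _ _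
      rw [hL] at h
      rw [← h, hp3, hP1]
    have h1 : (Lpᵀ * L) *ᵥ (fun _ => (1:ℝ)) = fun _ => (1:ℝ) := by
      rw [hCA, Matrix.one_mulVec]
    rw [← Matrix.mulVec_mulVec, G.lapMatrix_mulVec_const_eq_zero, Matrix.mulVec_zero] at h1
    have := congrFun h1 i0
    simp at this
  have hnc : (n : ℝ) * c = 1 := by
    rcases mul_eq_mul_right_iff.mp (by linarith [hc] : (n : ℝ) * c * c = 1 * c) with h | h
    · exact h
    · exact absurd h hcne
  have hPuu : ∀ u, (L * Lp) u u = 1 - c := by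
    intro u
    have h := hQc u u
    rw [hQdef] at h
    simp only [Matrix.sub_apply, Matrix.one_apply_eq] at h
    linarith
  rw [Finset.sum_congr rfl (fun u _ => hPuu u), Finset.sum_const, Finset.card_univ,
    Fintype.card_fin, nsmul_eq_mul]
  rw [mul_sub, mul_one, hnc]

open Finset in
/-- For a connected graph `G` on `n` vertices, the sum of the
effective resistances over all edges equals `n - 1`. -/
theorem sum_resistance_over_edges {n : ℕ} (G : SimpleGraph (Fin n))
    [DecidableRel G.Adj] (hG : G.Connected)
    (Lp : Matrix (Fin n) (Fin n) ℝ)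
    (hp1 : G.lapMatrix ℝ * Lp * G.lapMatrix ℝ = G.lapMatrix ℝ)
    (hp2 : Lp * G.lapMatrix ℝ * Lp = Lp)
    (hp3 : (G.lapMatrix ℝ * Lp)ᵀ = G.lapMatrix ℝ * Lp)
    (hp4 : (Lp * G.lapMatrix ℝ)ᵀ = Lp * G.lapMatrix ℝ) :
    ∑ u : Fin n, ∑ v : Fin n,
        (if u < v ∧ G.Adj u v then effRes Lp u v else 0) = (n : ℝ) - 1 := by
  set L := G.lapMatrix ℝ with hLdef
  have hLsymm : Lᵀ = L := G.isSymm_lapMatrix ℝ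
  have hLpsymm : Lpᵀ = Lp := pinv_isSymm L Lp hLsymm hp1 hp2 hp3 hp4
  have hLpa : ∀ u v, Lp u v = Lp v u := by
    intro u v
    conv_lhs => rw [← hLpsymm]
    rfl
  have hLa : ∀ u v, L u v = L v u := by
    intro u v
    conv_lhs => rw [← hLsymm]
    rfl
  have hres : ∀ u v, effRes Lp u v = effRes Lp v u := by
    intro u v
    unfold effRes
    rw [hLpa u v]
    ring
  have htrace : ∑ u : Fin n, (L * Lp) u u = (n : ℝ) - 1 := trace_lap_pinv G hG Lp hp1 hp3
  set S : ℝ := ∑ u : Fin n, ∑ v : Fin n,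
      (if u < v ∧ G.Adj u v then effRes Lp u v else 0) with hSdef
  -- swap the order of summation in S
  have hswap : S = ∑ u : Fin n, ∑ v : Fin n,
      (if v < u ∧ G.Adj u v then effRes Lp u v else 0) := by
    rw [hSdef, Finset.sum_comm]
    refine Finset.sum_congr rfl fun u _ => Finset.sum_congr rfl fun v _ => ?_
    simp only [G.adj_comm v u, hres v u]
  have hST : S + S = ∑ u : Fin n, ∑ v : Fin n,
      (if G.Adj u v then effRes Lp u v else 0) := by
    nth_rewrite 2 [hswap]
    rw [hSdef]
    simp_rw [← Finset.sum_add_distrib]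
    refine Finset.sum_congr rfl fun u _ => Finset.sum_congr rfl fun v _ => ?_
    by_cases ha : G.Adj u v
    · rcases lt_or_gt_of_ne ha.ne with h | h
      · simp [h, ha, lt_asymm h]
      · simp [h, ha, lt_asymm h]
    · simp [ha]
  have hTL : (∑ u : Fin n, ∑ v : Fin n, (if G.Adj u v then effRes Lp u v else 0))
      = ∑ u : Fin n, ∑ v : Fin n, (-(L u v) * effRes Lp u v) := by
    refine Finset.sum_congr rfl fun u _ => Finset.sum_congr rfl fun v _ => ?_
    by_cases he : u = v
    · subst he
      have h0 : effRes Lp u u = 0 := by simp only [effRes]; ring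
      simp [SimpleGraph.irrefl, h0]
    · have hLe : L u v = -(if G.Adj u v then (1:ℝ) else 0) := by
        simp [hLdef, SimpleGraph.lapMatrix, SimpleGraph.degMatrix, Matrix.sub_apply,
          Matrix.diagonal_apply_ne _ he]
      rw [hLe]
      by_cases ha : G.Adj u v <;> simp [ha]
  have hrow : ∀ u, ∑ v : Fin n, L u v = 0 := by
    intro u
    have h := congrFun (G.lapMatrix_mulVec_const_eq_zero (R := ℝ)) u
    simpa [Matrix.mulVec, dotProduct] using h
  have hcolsum : ∀ v, ∑ u : Fin n, L u v = 0 := by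
    intro v
    calc ∑ u : Fin n, L u v = ∑ u : Fin n, L v u :=
        Finset.sum_congr rfl fun u _ => hLa u v
      _ = 0 := hrow v
  have hexp : (∑ u : Fin n, ∑ v : Fin n, (-(L u v) * effRes Lp u v))
      = ∑ u : Fin n, ∑ v : Fin n, (2 * (L u v * Lp u v)) := by
    have e1 : ∀ u v : Fin n, -(L u v) * effRes Lp u v
        = 2 * (L u v * Lp u v) - L u v * Lp u u - L u v * Lp v v := by
      intro u v
      simp only [effRes]
      ring
    have h2 : ∀ u : Fin n, ∑ v : Fin n, L u v * Lp u u = 0 := by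
      intro u
      rw [← Finset.sum_mul, hrow u, zero_mul]
    have h3 : (∑ u : Fin n, ∑ v : Fin n, L u v * Lp v v) = 0 := by
      rw [Finset.sum_comm]
      refine Finset.sum_eq_zero fun v _ => ?_
      rw [← Finset.sum_mul, hcolsum v, zero_mul]
    calc (∑ u : Fin n, ∑ v : Fin n, (-(L u v) * effRes Lp u v))
        = (∑ u : Fin n, ∑ v : Fin n, (2 * (L u v * Lp u v)))
          - (∑ u : Fin n, ∑ v : Fin n, L u v * Lp u u)
          - (∑ u : Fin n, ∑ v : Fin n, L u v * Lp v v) := by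
          simp_rw [e1, Finset.sum_sub_distrib]
      _ = ∑ u : Fin n, ∑ v : Fin n, (2 * (L u v * Lp u v)) := by
          rw [h3, sub_zero, Finset.sum_eq_zero (fun u _ => h2 u), sub_zero]
  have hfin : (∑ u : Fin n, ∑ v : Fin n, (2 * (L u v * Lp u v)))
      = 2 * ∑ u : Fin n, (L * Lp) u u := by
    rw [Finset.mul_sum]
    refine Finset.sum_congr rfl fun u _ => ?_
    rw [Matrix.mul_apply, Finset.mul_sum]
    refine Finset.sum_congr rfl fun v _ => ?_
    rw [hLpa u v]
  have : S + S = 2 * ((n : ℝ) - 1) := by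
    rw [hST, hTL, hexp, hfin, htrace]
  linarith
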